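/- Let I = ⟨u_1,...,u_r⟩ be a complete intersection monomial ideal in S, P = ⟨y_1,...,y_r⟩ an associated prime with y_i ∈ supp(u_i), and g = (∏ u_i)/(∏ y_i). If m is a monomial with (I^n : m) = P, then g divides m and deg(m/g) ≥ (n−1)·α(I), where α(I) is the minimal degree of a generator of I. -/

import Mathlib

open MvPolynomial Ideal

section Aux

variable {K : Type*} [Field K] {σ : Type*}

lemma aux_prod_monomial {r : ℕ} (d : Fin r → (σ →₀ ℕ)) (s : Finset (Fin r)) :
    (∏ l ∈ s, monomial (d l) (1 : K)) = monomial (∑ l ∈ s, d l) 1 := by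
  classical
  induction s using Finset.induction with
  | empty => simp
  | insert _ _ h ih =>
      rw [Finset.prod_insert h, Finset.sum_insert h, ih, monomial_mul, one_mul]

/-- If `∑ c ≥ n` and `∑ c_l • e_l ≤ b` then `x^b ∈ I^n`. -/
lemma aux_mem_pow {r : ℕ} (e : Fin r → (σ →₀ ℕ)) (n : ℕ) (b : σ →₀ ℕ)
    (c : Fin r → ℕ) (hc : n ≤ ∑ l, c l) (hcb : (∑ l, c l • e l) ≤ b) :
    (monomial b 1 : MvPolynomial σ K) ∈
      (Ideal.span (Set.range fun l => (monomial (e l) 1 : MvPolynomial σ K))) ^ n := by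
  classical
  set I : Ideal (MvPolynomial σ K) :=
    Ideal.span (Set.range fun l => (monomial (e l) 1 : MvPolynomial σ K)) with hIdef
  have key : (∏ l, (monomial (e l) (1 : K)) ^ (c l)) ∈ I ^ (∑ l, c l) := by
    rw [← Finset.prod_pow_eq_pow_sum]
    refine Ideal.prod_mem_prod fun l _ => Ideal.pow_mem_pow ?_ (c l)
    exact Ideal.subset_span (Set.mem_range_self l)
  have hprod : (∏ l, (monomial (e l) (1 : K)) ^ (c l)) =
      monomial (∑ l, c l • e l) 1 := by
    simp_rw [monomial_pow, one_pow]
    exact aux_prod_monomial _ _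
  have hmul : (monomial b 1 : MvPolynomial σ K) =
      monomial (b - ∑ l, c l • e l) 1 * monomial (∑ l, c l • e l) 1 := by
    rw [monomial_mul, one_mul, tsub_add_cancel_of_le hcb]
  rw [hmul]
  exact Ideal.pow_le_pow_right hc
    (Ideal.mul_mem_left _ _ (hprod ▸ key))

/-- `I^n` is contained in the monomial ideal generated by degree-`n` products. -/
lemma aux_pow_le {r : ℕ} (e : Fin r → (σ →₀ ℕ)) (n : ℕ) :
    (Ideal.span (Set.range fun l => (monomial (e l) 1 : MvPolynomial σ K))) ^ n ≤
      Ideal.span ((fun s => monomial s (1 : K)) ''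
        {d | ∃ c : Fin r → ℕ, (∑ l, c l) = n ∧ d = ∑ l, c l • e l}) := by
  classical
  induction n with
  | zero =>
      rw [pow_zero, Ideal.one_eq_top, top_le_iff, Ideal.eq_top_iff_one]
      refine Ideal.subset_span ⟨0, ⟨0, by simp, by simp⟩, by simp⟩
  | succ n ih =>
      rw [pow_succ]
      refine le_trans (Ideal.mul_mono ih le_rfl) ?_
      rw [Ideal.span_mul_span']
      refine Ideal.span_le.2 ?_
      rintro z ⟨x, ⟨d, ⟨c, hc1, rfl⟩, rfl⟩, w, ⟨l, rfl⟩, rfl⟩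
      set c' : Fin r → ℕ := fun j => c j + (if j = l then 1 else 0) with hc'
      have hif : ∑ j, (if j = l then 1 else 0) • e j = e l := by
        rw [Finset.sum_eq_single l]
        · simp
        · intro j _ hj; rw [if_neg hj, zero_smul]
        · simp
      have key : (monomial (∑ j, c j • e j) (1 : K)) * monomial (e l) 1 =
          monomial (∑ j, c' j • e j) 1 := by
        rw [monomial_mul, one_mul]
        congr 1
        simp_rw [hc', add_smul, Finset.sum_add_distrib, hif]
      dsimp only
      rw [key]
      refine Ideal.subset_span ⟨_, ⟨c', ?_, rfl⟩, rfl⟩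
      simp [hc', Finset.sum_add_distrib, hc1]

end Aux

theorem dvd_and_deg_bound_of_colon_pow_eq_assPrime
    {K : Type*} [Field K] {σ : Type*} (r : ℕ) (hr : 0 < r) (e : Fin r → (σ →₀ ℕ))
    (he : ∀ l, e l ≠ 0)
    (hdisj : ∀ l l', l ≠ l' → Disjoint (e l).support (e l').support)
    (u : Fin r → MvPolynomial σ K) (hu : ∀ l, u l = monomial (e l) 1)
    (I : Ideal (MvPolynomial σ K)) (hI : I = Ideal.span (Set.range u))
    (y : Fin r → σ) (hy : ∀ l, y l ∈ (e l).support)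
    (P : Ideal (MvPolynomial σ K))
    (hP : P = Ideal.span (Set.range fun l => (X (y l) : MvPolynomial σ K)))
    (hPass : P ∈ associatedPrimes (MvPolynomial σ K) (MvPolynomial σ K ⧸ I))
    (g : σ →₀ ℕ) (hg : g = ∑ l, (e l - Finsupp.single (y l) 1))
    (n : ℕ) (hn : 1 ≤ n) (a : σ →₀ ℕ)
    (ha : Submodule.colon (I ^ n) (Ideal.span {(monomial a 1 : MvPolynomial σ K)}) = P) :
    g ≤ a ∧
    (n - 1) * (Finset.univ.inf' ⟨⟨0, hr⟩, Finset.mem_univ _⟩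
        (fun l => (e l).sum fun _ k => k)) ≤ ((a - g).sum fun _ k => k) := by
  classical
  have hI' : I = Ideal.span (Set.range fun l => (monomial (e l) 1 : MvPolynomial σ K)) := by
    rw [hI]; congr 1; exact congrArg _ (funext hu)
  -- e l s ≥ 1 at y l, and positivity on supports
  have hey : ∀ l, 1 ≤ e l (y l) := fun l => Nat.one_le_iff_ne_zero.2 (Finsupp.mem_support_iff.1 (hy l))
  -- P is prime hence proper
  have hPprime : P.IsPrime := hPass.isPrime
  -- x^a ∉ I^n
  have notin : (monomial a 1 : MvPolynomial σ K) ∉ I ^ n := by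
    intro h
    refine hPprime.ne_top (Ideal.eq_top_iff_one P |>.2 ?_)
    rw [← ha]
    exact Ideal.mem_colon_span_singleton.2 (by simpa using h)
  -- witnesses for each l
  have hwit : ∀ l, ∃ c : Fin r → ℕ, (∑ j, c j) = n ∧
      (∑ j, c j • e j) ≤ Finsupp.single (y l) 1 + a := by
    intro l
    have hXP : (X (y l) : MvPolynomial σ K) ∈ P := by
      rw [hP]; exact Ideal.subset_span (Set.mem_range_self l)
    rw [← ha] at hXP
    have hXP2 : (X (y l) : MvPolynomial σ K) • (monomial a 1 : MvPolynomial σ K) ∈ I ^ n :=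
      Ideal.mem_colon_span_singleton.1 hXP
    have hXm : (X (y l) : MvPolynomial σ K) • (monomial a 1 : MvPolynomial σ K) =
        monomial (Finsupp.single (y l) 1 + a) 1 := by
      rw [smul_eq_mul]
      have hX : (X (y l) : MvPolynomial σ K) = monomial (Finsupp.single (y l) 1) 1 := rfl
      rw [hX, monomial_mul, one_mul]
    rw [hXm, hI'] at hXP2
    have := aux_pow_le e n hXP2
    rw [mem_ideal_span_monomial_image] at this
    obtain ⟨d, ⟨c, hc1, rfl⟩, hle⟩ := this (Finsupp.single (y l) 1 + a) (by
      rw [support_monomial]; simp)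
    exact ⟨c, hc1, hle⟩
  choose c hc1 hc2 using hwit
  -- pointwise form of hc2
  have hc2' : ∀ l s, (∑ j, c l j * e j s) ≤ (if y l = s then 1 else 0) + a s := by
    intro l s
    have := hc2 l
    rw [Finsupp.le_def] at this
    have h2 := this s
    rw [Finsupp.add_apply, Finsupp.single_apply, Finsupp.finset_sum_apply] at h2
    simpa [Finsupp.smul_apply] using h2
  -- the quantities k' l
  set k' : Fin r → ℕ := fun l => (e l).support.inf' ⟨y l, hy l⟩ (fun s => a s / e l s) with hk'
  have F1 : ∀ l s, k' l * e l s ≤ a s := by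
    intro l s
    by_cases hs : s ∈ (e l).support
    · exact le_trans (Nat.mul_le_mul_right _ (Finset.inf'_le _ hs)) (Nat.div_mul_le_self _ _)
    · simp [Finsupp.notMem_support_iff.1 hs]
  have F2 : ∀ l (t : ℕ), (∀ s ∈ (e l).support, t * e l s ≤ a s) → t ≤ k' l := by
    intro l t h
    refine Finset.le_inf' _ _ fun s hs => ?_
    have hpos : 0 < e l s := Nat.pos_of_ne_zero (Finsupp.mem_support_iff.1 hs)
    exact (Nat.le_div_iff_mul_le hpos).2 (h s hs)
  -- single nonzero term in sums over j
  have hsingle : ∀ (j : Fin r) (s : σ), s ∈ (e j).support → ∀ j', j' ≠ j → e j' s = 0 := by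
    intro j s hs j' hj'
    by_contra h
    exact (Finset.disjoint_left.1 (hdisj j' j hj')) (Finsupp.mem_support_iff.2 h) hs
  -- W1': c l j ≤ k' j for j ≠ l
  have W1 : ∀ l j, j ≠ l → c l j ≤ k' j := by
    intro l j hjl
    refine F2 j _ fun s hs => ?_
    have h2 := hc2' l s
    have hys : y l ≠ s := by
      intro hEq
      exact (Finset.disjoint_left.1 (hdisj j l hjl)) hs (hEq ▸ hy l)
    rw [if_neg hys, zero_add] at h2
    calc c l j * e j s ≤ ∑ i, c l i * e i s :=
          Finset.single_le_sum (f := fun i => c l i * e i s) (fun i _ => Nat.zero_le _)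
            (Finset.mem_univ j)
      _ ≤ a s := h2
  -- W2 : c l l * e l s ≤ [y l = s] + a s for all s
  have W2 : ∀ l s, c l l * e l s ≤ (if y l = s then 1 else 0) + a s := by
    intro l s
    calc c l l * e l s ≤ ∑ i, c l i * e i s :=
          Finset.single_le_sum (f := fun i => c l i * e i s) (fun i _ => Nat.zero_le _)
            (Finset.mem_univ l)
      _ ≤ _ := hc2' l s
  -- W2' : c l l ≤ k' l + 1
  have W2' : ∀ l, c l l ≤ k' l + 1 := by
    intro l
    have : c l l - 1 ≤ k' l := by
      refine F2 l _ fun s hs => ?_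
      have h2 := W2 l s
      have h3 : 1 ≤ e l s := Nat.one_le_iff_ne_zero.2 (Finsupp.mem_support_iff.1 hs)
      have h4 : (c l l - 1) * e l s = c l l * e l s - e l s := by
        rw [Nat.sub_one_mul]
      have hif : (if y l = s then 1 else 0) ≤ 1 := by split <;> omega
      generalize c l l * e l s = A at h2 h4
      generalize (c l l - 1) * e l s = B at h4
      omega
    omega
  -- W3 : ∑ k' < n
  have W3 : ∑ j, k' j < n := by
    by_contra h
    push_neg at h
    refine notin ?_
    rw [hI']
    refine aux_mem_pow e n a k' h ?_
    rw [Finsupp.le_def]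
    intro s
    rw [Finsupp.finset_sum_apply]
    simp_rw [Finsupp.smul_apply, smul_eq_mul]
    by_cases hex : ∃ j, s ∈ (e j).support
    · obtain ⟨j, hj⟩ := hex
      rw [Finset.sum_eq_single_of_mem j (Finset.mem_univ j)
        (fun j' _ hj' => by rw [hsingle j s hj j' hj', mul_zero])]
      exact F1 j s
    · push_neg at hex
      have : ∀ j, e j s = 0 := fun j => Finsupp.notMem_support_iff.1 (hex j)
      simp [this]
  -- W4 : k' l + 1 ≤ c l l
  have W4 : ∀ l, k' l + 1 ≤ c l l := by
    intro l
    have h2 : c l l + ∑ j ∈ Finset.univ.erase l, c l j = n := by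
      rw [Finset.add_sum_erase _ _ (Finset.mem_univ l)]; exact hc1 l
    have h3 : ∑ j ∈ Finset.univ.erase l, c l j ≤ ∑ j ∈ Finset.univ.erase l, k' j :=
      Finset.sum_le_sum fun j hj => W1 l j (Finset.ne_of_mem_erase hj)
    have h4 : k' l + ∑ j ∈ Finset.univ.erase l, k' j = ∑ j, k' j :=
      Finset.add_sum_erase _ _ (Finset.mem_univ l)
    omega
  -- W5 : (k' l + 1) * e l s ≤ [y l = s] + a s
  have W5 : ∀ l s, (k' l + 1) * e l s ≤ (if y l = s then 1 else 0) + a s := by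
    intro l s
    exact le_trans (Nat.mul_le_mul_right _ (W4 l)) (W2 l s)
  -- pointwise value of g
  have hgs : ∀ s, g s = ∑ l, (e l s - (if y l = s then 1 else 0)) := by
    intro s
    rw [hg, Finsupp.finset_sum_apply]
    refine Finset.sum_congr rfl fun l _ => ?_
    rw [Finsupp.tsub_apply, Finsupp.single_apply]
  -- goal 1 pointwise
  have goal1pt : ∀ s, g s ≤ a s := by
    intro s
    rw [hgs s]
    by_cases hex : ∃ j, s ∈ (e j).support
    · obtain ⟨j, hj⟩ := hex
      rw [Finset.sum_eq_single_of_mem j (Finset.mem_univ j)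
        (fun j' _ hj' => by rw [hsingle j s hj j' hj']; simp)]
      have h5 := W5 j s
      have h6 : e j s ≤ (k' j + 1) * e j s := Nat.le_mul_of_pos_left _ (Nat.succ_pos _)
      have hif : (if y j = s then 1 else 0) ≤ 1 := by split <;> omega
      generalize (k' j + 1) * e j s = B at h5 h6
      omega
    · push_neg at hex
      have : ∀ j, e j s = 0 := fun j => Finsupp.notMem_support_iff.1 (hex j)
      simp [this]
  have goal1 : g ≤ a := Finsupp.le_def.2 goal1pt
  refine ⟨goal1, ?_⟩
  -- degree bound
  set α := Finset.univ.inf' (⟨⟨0, hr⟩, Finset.mem_univ _⟩ : Finset.Nonempty (Finset.univ : Finset (Fin r)))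
      (fun l => (e l).sum fun _ k => k) with hα
  -- per-point bound on (a - g) over supp (e l)
  have hpt : ∀ l, ∀ s ∈ (e l).support, k' l * e l s ≤ (a - g) s := by
    intro l s hs
    rw [Finsupp.tsub_apply]
    have hgv : g s = e l s - (if y l = s then 1 else 0) := by
      rw [hgs s]
      rw [Finset.sum_eq_single_of_mem l (Finset.mem_univ l)
        (fun j' _ hj' => by rw [hsingle l s hs j' hj']; simp)]
    have h5 := W5 l s
    have h3 : 1 ≤ e l s := Nat.one_le_iff_ne_zero.2 (Finsupp.mem_support_iff.1 hs)
    have hif : (if y l = s then 1 else 0) ≤ 1 := by split <;> omega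
    have hsum : (k' l + 1) * e l s = k' l * e l s + e l s := by ring
    generalize hA : k' l * e l s = A at *
    generalize hB : (k' l + 1) * e l s = B at *
    omega
  -- the big finset
  set F : Finset σ := Finset.univ.biUnion (fun l : Fin r => (e l).support) with hF
  have hdisjF : Set.PairwiseDisjoint (↑(Finset.univ : Finset (Fin r)))
      (fun l : Fin r => (e l).support) := by
    intro i _ j _ hij
    exact hdisj i j hij
  have step1 : ∑ l, (k' l * ((e l).sum fun _ k => k)) ≤ ∑ s ∈ F, (a - g) s := by
    rw [hF, Finset.sum_biUnion hdisjF]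
    refine Finset.sum_le_sum fun l _ => ?_
    have : k' l * ((e l).sum fun _ k => k) = ∑ s ∈ (e l).support, k' l * e l s := by
      rw [Finsupp.sum, Finset.mul_sum]
    rw [this]
    exact Finset.sum_le_sum fun s hs => hpt l s hs
  have step2 : ∑ s ∈ F, (a - g) s ≤ ((a - g).sum fun _ k => k) := by
    have hsub : (a - g).support ⊆ F ∪ (a - g).support := Finset.subset_union_right
    have : ((a - g).sum fun _ k => k) = ∑ s ∈ F ∪ (a - g).support, (a - g) s := by
      rw [Finsupp.sum_of_support_subset _ hsub _ (fun s _ => rfl)]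
    rw [this]
    exact Finset.sum_le_sum_of_subset Finset.subset_union_left
  have step3 : (n - 1) * α ≤ ∑ l, (k' l * ((e l).sum fun _ k => k)) := by
    have hαle : ∀ l, α ≤ (e l).sum fun _ k => k := fun l =>
      Finset.inf'_le _ (Finset.mem_univ l)
    calc (n - 1) * α ≤ (∑ j, k' j) * α := by
          refine Nat.mul_le_mul_right _ ?_
          have := W4 ⟨0, hr⟩
          have h2 : c ⟨0, hr⟩ ⟨0, hr⟩ + ∑ j ∈ Finset.univ.erase ⟨0, hr⟩, c ⟨0, hr⟩ j = n := by
            rw [Finset.add_sum_erase _ _ (Finset.mem_univ _)]; exact hc1 _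
          have h3 : ∑ j ∈ Finset.univ.erase ⟨0, hr⟩, c ⟨0, hr⟩ j ≤
              ∑ j ∈ Finset.univ.erase ⟨0, hr⟩, k' j :=
            Finset.sum_le_sum fun j hj => W1 _ j (Finset.ne_of_mem_erase hj)
          have h4 : k' ⟨0, hr⟩ + ∑ j ∈ Finset.univ.erase ⟨0, hr⟩, k' j = ∑ j, k' j :=
            Finset.add_sum_erase _ _ (Finset.mem_univ _)
          have h5 := W2' ⟨0, hr⟩
          omega
      _ = ∑ j, k' j * α := by rw [Finset.sum_mul]
      _ ≤ _ := Finset.sum_le_sum fun l _ => Nat.mul_le_mul_left _ (hαle l)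
  exact le_trans step3 (le_trans step1 step2)
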